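/- The output of the nonlocal state identification protocol decomposes as ideal part plus error: (Y† ⊗ I_C) (I ⊗ M) (Y ⊗ I_C) ψ₀ = cor + err, where ψ₀ = √p a₀ ⊗ α^{⊗m} ⊗ s ⊗ |0⟩ + √(1−p) a₁ ⊗ v₀ ⊗ s ⊗ |0⟩ is the initial state (incoming state with the m−1 catalyst copies of α attached, control register in state s, answer qubit in |0⟩). -/

import Mathlib

/-- The output of the nonlocal state identification protocol decomposes as an
ideal part plus an error term: `(Y† ⊗ I_C)(I ⊗ M)(Y ⊗ I_C) ψ₀ = cor + err`,
where `ψ₀ = √p a₀ ⊗ α^{⊗m} ⊗ s ⊗ |0⟩ + √(1−p) a₁ ⊗ v₀ ⊗ s ⊗ |0⟩`.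
The total space `R ⊗ (ℂ^d)^{⊗m} ⊗ ℂ^m ⊗ ℂ²` is modelled as functions from the
index set `(Fin m → Fin d) × Fin m × Fin 2` to the abstract space `R`. -/
theorem stmt_7 (m d : ℕ) (hm : 1 ≤ m) (hd : 2 ≤ d)
    (R : Type*) [NormedAddCommGroup R] [InnerProductSpace ℂ R] [FiniteDimensional ℂ R]
    (a₀ a₁ : R) (ha₀ : ‖a₀‖ = 1) (ha₁ : ‖a₁‖ = 1)
    (p : ℝ) (hp0 : 0 ≤ p) (hp1 : p ≤ 1)
    (α αp : Fin d → ℂ)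
    (hα : ∑ i, star (α i) * α i = 1) (hαp : ∑ i, star (αp i) * αp i = 1)
    (horth : ∑ i, star (α i) * αp i = 0)
    (s : Fin m → ℂ) (hs : s = fun _ => (Real.sqrt m : ℂ)⁻¹)
    (ket0 ket1 minus : Fin 2 → ℂ)
    (hket0 : ket0 = fun b => if b = 0 then 1 else 0)
    (hket1 : ket1 = fun b => if b = 1 then 1 else 0)
    (hminus : minus = fun b => (ket0 b - ket1 b) * (Real.sqrt 2 : ℂ)⁻¹)
    (αm : (Fin m → Fin d) → ℂ) (hαm : αm = fun f => ∏ i, α (f i))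
    (v : Fin m → (Fin m → Fin d) → ℂ)
    (hv : v = fun k f => ∏ i, (if i = k then αp (f i) else α (f i)))
    (flip : Fin 2 → Fin 2) (hflip : flip = fun b => if b = 0 then 1 else 0)
    (ψ₀ cor err : (Fin m → Fin d) × Fin m × Fin 2 → R)
    (hψ₀ : ψ₀ = fun q =>
        ((Real.sqrt p : ℂ) * αm q.1 * s q.2.1 * ket0 q.2.2) • a₀
        + ((Real.sqrt (1 - p) : ℂ) * v ⟨0, by omega⟩ q.1 * s q.2.1 * ket0 q.2.2) • a₁)
    (hcor : cor = fun q =>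
        ((Real.sqrt p : ℂ) * αm q.1 * s q.2.1 * ket0 q.2.2) • a₀
        + ((Real.sqrt (1 - p) : ℂ) * v ⟨0, by omega⟩ q.1 * s q.2.1 * ket1 q.2.2) • a₁)
    (herr : err = fun q =>
        (((Real.sqrt 2 / Real.sqrt m ^ 3) * Real.sqrt (1 - p) : ℂ)
            * (∑ j : Fin m, ∑ j' : Fin m,
                v (j - j') q.1 * (if q.2.1 = j' then 1 else 0))
            * minus q.2.2) • a₁)
    (Y Ydag M : ((Fin m → Fin d) × Fin m × Fin 2 → R) →
        ((Fin m → Fin d) × Fin m × Fin 2 → R))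
    (hY : Y = fun ψ q => ψ ((fun k => q.1 (k + q.2.1)), q.2.1, q.2.2))
    (hYdag : Ydag = fun ψ q => ψ ((fun k => q.1 (k - q.2.1)), q.2.1, q.2.2))
    (hM : M = fun ψ q => ψ (q.1, q.2.1, flip q.2.2)
        + s q.2.1 • ∑ j', star (s j') • (ψ (q.1, j', q.2.2) - ψ (q.1, j', flip q.2.2))) :
    Ydag (M (Y ψ₀)) = fun q => cor q + err q := by

  haveI : NeZero m := ⟨by omega⟩
  have hm0 : (0:ℝ) < m := by exact_mod_cast Nat.lt_of_lt_of_le Nat.zero_lt_one hm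
  have hsmR : Real.sqrt m ≠ 0 := by positivity
  have hsm0 : (Real.sqrt m : ℂ) ≠ 0 := by exact_mod_cast hsmR
  have hsm : ((Real.sqrt m : ℂ)) ^ 2 = (m : ℂ) := by
    rw [← Complex.ofReal_pow, Real.sq_sqrt hm0.le]
    push_cast
    ring
  have hs20 : (Real.sqrt 2 : ℂ) ≠ 0 := by
    have : Real.sqrt 2 ≠ 0 := by positivity
    exact_mod_cast this
  have hshift : ∀ (t : Fin m) (w : Fin m → ℂ), (∏ i, w (i + t)) = ∏ i, w i := fun t w =>
    Fintype.prod_equiv (Equiv.addRight t) _ _ (fun _ => rfl)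
  have hαm_shift : ∀ (t : Fin m) (f : Fin m → Fin d), αm (fun i => f (i + t)) = αm f := by
    intro t f; rw [hαm]; exact hshift t (fun i => α (f i))
  have hv_shift : ∀ (k t : Fin m) (f : Fin m → Fin d),
      v k (fun i => f (i + t)) = v (k + t) f := by
    intro k t f; rw [hv]
    refine Fintype.prod_equiv (Equiv.addRight t) _ _ (fun i => ?_)
    simp only [Equiv.coe_addRight]
    by_cases h : i = k
    · rw [if_pos h]; exact (if_pos (show i + t = k + t by rw [h])).symm
    · rw [if_neg h]; exact (if_neg (show ¬ (i + t = k + t) from fun hc => h (add_right_cancel hc))).symm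
  have hv0 : (⟨0, by omega⟩ : Fin m) = 0 := rfl
  have key : ∀ (f : Fin m → Fin d) (t j' : Fin m) (c : Fin 2),
      Y ψ₀ ((fun k => f (k - t)), j', c)
        = ((Real.sqrt p : ℂ) * αm f * s j' * ket0 c) • a₀
          + ((Real.sqrt (1-p) : ℂ) * v (j' - t) f * s j' * ket0 c) • a₁ := by
    intro f t j' c
    rw [hY, hψ₀]
    simp only [hv0]
    have harg : (fun k : Fin m => f (k + j' - t)) = fun k => f (k + (j' - t)) := by
      funext k; rw [add_sub_assoc]
    rw [harg, hαm_shift, hv_shift, zero_add]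
  funext q
  obtain ⟨f, j, b⟩ := q
  rw [hYdag, hM]
  simp only [key f j]
  rw [hcor, herr]
  simp only [hv0]
  -- simplify the double sum with indicator on RHS
  have hind : ∀ j₂ : Fin m, (∑ j' : Fin m, v (j₂ - j') f * (if j = j' then 1 else 0))
      = v (j₂ - j) f := by
    intro j₂
    simp [mul_ite, Finset.sum_ite_eq]
  simp only [hind]
  -- name the constants
  set A : ℂ := (Real.sqrt p : ℂ) * αm f with hA
  set B : ℂ := (Real.sqrt (1-p) : ℂ) with hB
  set c : ℂ := ((Real.sqrt m : ℝ) : ℂ)⁻¹ with hc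
  have hsc : ∀ j' : Fin m, s j' = c := by intro j'; rw [hs]
  have hstar : star c = c := by
    rw [hc, ← Complex.ofReal_inv, Complex.star_def, Complex.conj_ofReal]
  -- rewrite each summand
  have hterm : ∀ j' : Fin m,
      star (s j') • (((A * s j' * ket0 b) • a₀ + (B * v (j' - j) f * s j' * ket0 b) • a₁)
        - ((A * s j' * ket0 (flip b)) • a₀ + (B * v (j' - j) f * s j' * ket0 (flip b)) • a₁))
      = (c * (A * c * (ket0 b - ket0 (flip b)))) • a₀
        + ((c * (B * c * (ket0 b - ket0 (flip b)))) * v (j' - j) f) • a₁ := by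
    intro j'
    rw [hsc, hstar]
    module
  rw [Finset.sum_congr rfl (fun j' _ => hterm j')]
  rw [Finset.sum_add_distrib, Finset.sum_const, Finset.card_univ, Fintype.card_fin,
    ← Finset.sum_smul, ← Finset.mul_sum]
  rw [← Nat.cast_smul_eq_nsmul ℂ, smul_smul]
  rw [hsc, hminus]
  -- now everything is scalars times a₀, a₁
  have hket01 : ket0 (flip b) = ket1 b := by
    rw [hket0, hket1, hflip]; fin_cases b <;> norm_num
  rw [hket01]
  set S : ℂ := ∑ j' : Fin m, v (j' - j) f with hS
  have e0 : A * c * ket1 b + c * ((m : ℂ) * (c * (A * c * (ket0 b - ket1 b))))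
      = A * c * ket0 b := by
    have hcm : (m : ℂ) * (c * c) = 1 := by
      rw [hc]; field_simp; rw [← hsm]
    have : c * ((m : ℂ) * (c * (A * c * (ket0 b - ket1 b))))
        = ((m:ℂ) * (c * c)) * (A * c * (ket0 b - ket1 b)) := by ring
    rw [this, hcm]; ring
  have e1 : B * v 0 f * c * ket1 b + c * ((c * (B * c * (ket0 b - ket1 b))) * S)
      = B * v 0 f * c * ket1 b
        + ((Real.sqrt 2 / Real.sqrt m ^ 3 : ℝ) : ℂ) * B * S
          * ((ket0 b - ket1 b) * ((Real.sqrt 2 : ℝ) : ℂ)⁻¹) := by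
    have hcast : ((Real.sqrt 2 / Real.sqrt m ^ 3 : ℝ) : ℂ)
        = ((Real.sqrt 2 : ℝ) : ℂ) / ((Real.sqrt m : ℝ) : ℂ) ^ 3 := by push_cast; ring
    rw [hcast, hc]
    field_simp
  calc (A * c * ket1 b) • a₀ + (B * v (j - j) f * c * ket1 b) • a₁
        + c • (((m:ℂ) * (c * (A * c * (ket0 b - ket1 b)))) • a₀
          + ((c * (B * c * (ket0 b - ket1 b))) * S) • a₁)
      = (A * c * ket1 b + c * ((m : ℂ) * (c * (A * c * (ket0 b - ket1 b))))) • a₀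
        + (B * v 0 f * c * ket1 b + c * ((c * (B * c * (ket0 b - ket1 b))) * S)) • a₁ := by
        rw [sub_self]
        module
    _ = _ := by
        rw [e0, e1]
        beta_reduce
        push_cast
        module
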